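/- Let k be a field, g a finite-dimensional Lie algebra over k, h ⊆ g a Lie subalgebra, m ⊆ g a linear subspace with g = h ⊕ m, projections P_h, P_m, and set ρ(x)u = P_m[x,u], φ(x,u) = P_h[x,u] for x ∈ h, u ∈ m, and θ_m(u,v) = P_m[u,v] for u,v ∈ m. Then δφ = dθ_m: for all x ∈ h and u₁, u₂ ∈ m, ρ(φ(x,u₁))u₂ − ρ(φ(x,u₂))u₁ = ρ(x)θ_m(u₁,u₂) − θ_m(ρ(x)u₁, u₂) − θ_m(u₁, ρ(x)u₂). -/
import Mathlib


/-- part (1) of the main Theorem: For a subalgebra `h ⊆ g` with complement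
`m`, projections `P_h`, `P_m`, and `ρ(x)u = P_m⁅x,u⁆`, `φ(x,u) = P_h⁅x,u⁆`,
`θ_m(u,v) = P_m⁅u,v⁆`, one has `δφ = dθ_m`:
`ρ(φ(x,u₁))u₂ − ρ(φ(x,u₂))u₁ = ρ(x)θ_m(u₁,u₂) − θ_m(ρ(x)u₁,u₂) − θ_m(u₁,ρ(x)u₂)`. -/
theorem delta_phi_eq_d_theta_m
    {k : Type*} [Field k] {g : Type*} [LieRing g] [LieAlgebra k g]
    [FiniteDimensional k g]
    (h : LieSubalgebra k g) (m : Submodule k g)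
    (hc : IsCompl h.toSubmodule m)
    (Ph : g →ₗ[k] h.toSubmodule) (Pm : g →ₗ[k] m)
    (hsum : ∀ z : g, (Ph z : g) + (Pm z : g) = z) :
    ∀ (x : h) (u₁ u₂ : m),
      Pm ⁅(Ph ⁅(x : g), (u₁ : g)⁆ : g), (u₂ : g)⁆
          - Pm ⁅(Ph ⁅(x : g), (u₂ : g)⁆ : g), (u₁ : g)⁆
        = Pm ⁅(x : g), (Pm ⁅(u₁ : g), (u₂ : g)⁆ : g)⁆
          - Pm ⁅(Pm ⁅(x : g), (u₁ : g)⁆ : g), (u₂ : g)⁆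
          - Pm ⁅(u₁ : g), (Pm ⁅(x : g), (u₂ : g)⁆ : g)⁆ := by
  -- Pm vanishes on h
  have hPm0 : ∀ z : g, z ∈ h.toSubmodule → (Pm z : g) = 0 := by
    intro z hz
    have h1 : (Pm z : g) = z - (Ph z : g) := eq_sub_of_add_eq' (hsum z)
    have hm : (Pm z : g) ∈ h.toSubmodule := by
      rw [h1]; exact Submodule.sub_mem _ hz (Ph z).2
    have hmem : (Pm z : g) ∈ h.toSubmodule ⊓ m := ⟨hm, (Pm z).2⟩
    rw [hc.inf_eq_bot] at hmem
    simpa using hmem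
  intro x u₁ u₂
  apply Subtype.ext
  -- work with the g-valued composite q = m.subtype ∘ Pm
  set q : g →ₗ[k] g := m.subtype.comp Pm with hq
  have hqdef : ∀ z : g, (Pm z : g) = q z := fun z => rfl
  have hPh : ∀ z : g, (Ph z : g) = z - q z := by
    intro z; have := hsum z; rw [hqdef] at this; exact eq_sub_of_add_eq this
  have hq0 : ∀ z : g, z ∈ h.toSubmodule → q z = 0 := fun z hz => hPm0 z hz
  show q ⁅(Ph ⁅(x : g), (u₁ : g)⁆ : g), (u₂ : g)⁆
          - q ⁅(Ph ⁅(x : g), (u₂ : g)⁆ : g), (u₁ : g)⁆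
        = q ⁅(x : g), (Pm ⁅(u₁ : g), (u₂ : g)⁆ : g)⁆
          - q ⁅(Pm ⁅(x : g), (u₁ : g)⁆ : g), (u₂ : g)⁆
          - q ⁅(u₁ : g), (Pm ⁅(x : g), (u₂ : g)⁆ : g)⁆
  rw [hqdef, hqdef, hqdef, hPh, hPh]
  have hmid : q ⁅(u₁ : g), (u₂ : g)⁆ = ⁅(u₁ : g), (u₂ : g)⁆ - (Ph ⁅(u₁ : g), (u₂ : g)⁆ : g) := by
    have := hsum ⁅(u₁ : g), (u₂ : g)⁆; rw [hqdef] at this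
    exact eq_sub_of_add_eq' this
  rw [hmid]
  have hx0 : q ⁅(x : g), (Ph ⁅(u₁ : g), (u₂ : g)⁆ : g)⁆ = 0 := by
    apply hq0
    exact h.lie_mem x.2 (Ph ⁅(u₁ : g), (u₂ : g)⁆).2
  have jac : ⁅(x : g), ⁅(u₁ : g), (u₂ : g)⁆⁆
      = ⁅⁅(x : g), (u₁ : g)⁆, (u₂ : g)⁆ + ⁅(u₁ : g), ⁅(x : g), (u₂ : g)⁆⁆ :=
    leibniz_lie _ _ _
  have sk1 : ⁅(u₁ : g), ⁅(x : g), (u₂ : g)⁆⁆ = -⁅⁅(x : g), (u₂ : g)⁆, (u₁ : g)⁆ :=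
    (lie_skew _ _).symm
  have sk2 : ⁅(u₁ : g), q ⁅(x : g), (u₂ : g)⁆⁆ = -⁅q ⁅(x : g), (u₂ : g)⁆, (u₁ : g)⁆ :=
    (lie_skew _ _).symm
  simp only [sub_lie, lie_sub, map_sub, jac, map_add, hx0, sk1, sk2, map_neg]
  abel
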